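/- For every real s with 2 < s < 3 there exists N such that for all n ≥ N there exists a Boolean function f : F_2^n → F_2 of algebraic degree 3 with sparsity ‖f‖ ≤ n^s such that every 0-restriction of f on at least 3·√(ln n)·n^{(3−s)/2} variables still has algebraic degree 3. -/
import Mathlib

open Finset

/-- Evaluation of the multilinear polynomial over `F₂` whose set of monomials is `M`. -/
def anfEval {n : ℕ} (M : Finset (Finset (Fin n))) (x : Fin n → ZMod 2) : ZMod 2 :=
  ∑ S ∈ M, ∏ j ∈ S, x j

/-- `M` is the algebraic normal form (set of monomials) of the Boolean function `f`. -/
def IsANF {n : ℕ} (f : (Fin n → ZMod 2) → ZMod 2) (M : Finset (Finset (Fin n))) : Prop :=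
  ∀ x, f x = anfEval M x

/-- The number of crucial terms (monomials of degree at least 3) of an ANF. -/
def crucialCount {n : ℕ} (M : Finset (Finset (Fin n))) : ℕ :=
  (M.filter fun S => 3 ≤ S.card).card

/-- The `0`-restriction of `f` keeping exactly the variables in `K` (all other
variables are set to the constant `0`). It is a Boolean function on `K.card` variables. -/
def zeroRestrict {n : ℕ} (f : (Fin n → ZMod 2) → ZMod 2) (K : Finset (Fin n)) :
    (Fin n → ZMod 2) → ZMod 2 :=
  fun x => f fun i => if i ∈ K then x i else 0

lemma anf_zero {n : ℕ} (M : Finset (Finset (Fin n))) (h : ∀ x, anfEval M x = 0) : M = ∅ := by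
  by_contra hM
  obtain ⟨S, hS, hmin⟩ := Finset.exists_min_image M Finset.card (Finset.nonempty_of_ne_empty hM)
  have hx := h (fun i => if i ∈ S then 1 else 0)
  rw [anfEval] at hx
  have key : ∀ S' ∈ M, (∏ j ∈ S', (if j ∈ S then (1:ZMod 2) else 0)) = if S' = S then 1 else 0 := by
    intro S' hS'
    by_cases hsub : S' ⊆ S
    · have heq : S' = S := Finset.eq_of_subset_of_card_le hsub (hmin S' hS')
      subst heq
      rw [if_pos rfl, Finset.prod_congr rfl (fun j hj => if_pos hj), Finset.prod_const_one]
    · obtain ⟨j, hj, hjS⟩ := Finset.not_subset.mp hsub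
      rw [if_neg (by rintro rfl; exact hsub subset_rfl),
        Finset.prod_eq_zero hj (show (if j ∈ S then (1:ZMod 2) else 0) = 0 from if_neg hjS)]
  rw [Finset.sum_congr rfl key, Finset.sum_ite_eq' M S (fun _ => 1), if_pos hS] at hx
  exact one_ne_zero hx

lemma anf_unique {n : ℕ} (M M' : Finset (Finset (Fin n)))
    (h : ∀ x, anfEval M x = anfEval M' x) : M = M' := by
  have key : (M \ M') ∪ (M' \ M) = ∅ := by
    apply anf_zero
    intro x
    have hd : Disjoint (M \ M') (M' \ M) := disjoint_sdiff_sdiff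
    rw [anfEval, Finset.sum_union hd]
    have h1 := Finset.sum_inter_add_sum_sdiff M M' (fun S => ∏ j ∈ S, x j)
    have h2 := Finset.sum_inter_add_sum_sdiff M' M (fun S => ∏ j ∈ S, x j)
    rw [Finset.inter_comm] at h2
    have h20 : (2 : ZMod 2) = 0 := rfl
    have hx := h x
    rw [anfEval, anfEval] at hx
    linear_combination h1 + h2 - hx - (∑ S ∈ M ∩ M', ∏ j ∈ S, x j) * h20 +
      (∑ S ∈ M', ∏ j ∈ S, x j) * h20 + (∑ S ∈ M, ∏ j ∈ S, x j) * h20 -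
      (∑ S ∈ M', ∏ j ∈ S, x j) * h20
  rw [Finset.union_eq_empty] at key
  exact Finset.Subset.antisymm (Finset.sdiff_eq_empty_iff_subset.mp key.1)
    (Finset.sdiff_eq_empty_iff_subset.mp key.2)

lemma zeroRestrict_anf {n : ℕ} (M : Finset (Finset (Fin n))) (K : Finset (Fin n)) :
    IsANF (zeroRestrict (anfEval M) K) (M.filter (· ⊆ K)) := by
  intro x
  rw [zeroRestrict, anfEval, anfEval, Finset.sum_filter]
  refine Finset.sum_congr rfl fun S hS => ?_
  by_cases hsub : S ⊆ K
  · rw [if_pos hsub]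
    exact Finset.prod_congr rfl fun j hj => if_pos (hsub hj)
  · obtain ⟨j, hj, hjK⟩ := Finset.not_subset.mp hsub
    rw [if_neg hsub, Finset.prod_eq_zero hj (show (if j ∈ K then x j else 0) = 0 from if_neg hjK)]

lemma eq_pair_of_card_two' {α : Type*} [LinearOrder α] {T : Finset α} (h : T.card = 2)
    (hne : T.Nonempty) : T = {T.min' hne, T.max' hne} := by
  have hlt : T.min' hne < T.max' hne := T.min'_lt_max'_of_card (by omega)
  refine (Finset.eq_of_subset_of_card_le ?_ ?_).symm
  · intro a ha
    simp only [Finset.mem_insert, Finset.mem_singleton] at ha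
    rcases ha with rfl | rfl
    exacts [T.min'_mem hne, T.max'_mem hne]
  · rw [h, Finset.card_insert_of_notMem (by simp [hlt.ne]), Finset.card_singleton]

def enc (b : ℕ) {n : ℕ} (S : Finset (Fin n)) : ℕ × ℕ × ℕ :=
  if h : S.card = 3 then
    have h1 : S.Nonempty := Finset.card_pos.mp (by omega)
    have h2 : (S.erase (S.min' h1)).Nonempty := by
      rw [← Finset.card_pos, Finset.card_erase_of_mem (S.min'_mem h1), h]
      norm_num
    ((S.min' h1).val, ((S.erase (S.min' h1)).min' h2).val % b,
      ((S.erase (S.min' h1)).max' h2).val % b)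
  else (0, 0, 0)

lemma enc_inj {b n : ℕ} {S₁ S₂ : Finset (Fin n)}
    (h₁ : S₁.card = 3) (hq₁ : ∀ i ∈ S₁, ∀ j ∈ S₁, i.val / b = j.val / b)
    (h₂ : S₂.card = 3) (hq₂ : ∀ i ∈ S₂, ∀ j ∈ S₂, i.val / b = j.val / b)
    (he : enc b S₁ = enc b S₂) : S₁ = S₂ := by
  rw [enc, dif_pos h₁, enc, dif_pos h₂] at he
  have hne₁ : S₁.Nonempty := Finset.card_pos.mp (by omega)
  have hne₂ : S₂.Nonempty := Finset.card_pos.mp (by omega)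
  set m₁ := S₁.min' hne₁ with hm₁
  set m₂ := S₂.min' hne₂ with hm₂
  have hv : m₁.val = m₂.val := congrArg Prod.fst he
  have hmm : m₁ = m₂ := Fin.ext hv
  have hT₁ : (S₁.erase m₁).card = 2 := by
    rw [Finset.card_erase_of_mem (S₁.min'_mem hne₁), h₁]
  have hT₂ : (S₂.erase m₂).card = 2 := by
    rw [Finset.card_erase_of_mem (S₂.min'_mem hne₂), h₂]
  have hTne₁ : (S₁.erase m₁).Nonempty := Finset.card_pos.mp (by omega)
  have hTne₂ : (S₂.erase m₂).Nonempty := Finset.card_pos.mp (by omega)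
  have hmid : ((S₁.erase m₁).min' hTne₁).val % b = ((S₂.erase m₂).min' hTne₂).val % b :=
    congrArg (fun p : ℕ × ℕ × ℕ => p.2.1) he
  have hmax : ((S₁.erase m₁).max' hTne₁).val % b = ((S₂.erase m₂).max' hTne₂).val % b :=
    congrArg (fun p : ℕ × ℕ × ℕ => p.2.2) he
  have key : ∀ (S : Finset (Fin n)) (hne : S.Nonempty),
      (∀ i ∈ S, ∀ j ∈ S, i.val / b = j.val / b) →
      ∀ i ∈ S, i.val = b * ((S.min' hne).val / b) + i.val % b := by
    intro S hne hq i hi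
    rw [← hq i hi _ (S.min'_mem hne), Nat.div_add_mod]
  have e1 : ((S₁.erase m₁).min' hTne₁).val = ((S₂.erase m₂).min' hTne₂).val := by
    rw [key S₁ hne₁ hq₁ _ (Finset.erase_subset _ _ ((S₁.erase m₁).min'_mem hTne₁)),
        key S₂ hne₂ hq₂ _ (Finset.erase_subset _ _ ((S₂.erase m₂).min'_mem hTne₂)),
        hmid, hv]
  have e2 : ((S₁.erase m₁).max' hTne₁).val = ((S₂.erase m₂).max' hTne₂).val := by
    rw [key S₁ hne₁ hq₁ _ (Finset.erase_subset _ _ ((S₁.erase m₁).max'_mem hTne₁)),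
        key S₂ hne₂ hq₂ _ (Finset.erase_subset _ _ ((S₂.erase m₂).max'_mem hTne₂)),
        hmax, hv]
  have r₁ : S₁ = insert m₁ (S₁.erase m₁) := (Finset.insert_erase (S₁.min'_mem hne₁)).symm
  have r₂ : S₂ = insert m₂ (S₂.erase m₂) := (Finset.insert_erase (S₂.min'_mem hne₂)).symm
  have q1 : (S₁.erase m₁).min' hTne₁ = (S₂.erase m₂).min' hTne₂ := Fin.ext e1
  have q2 : (S₁.erase m₁).max' hTne₁ = (S₂.erase m₂).max' hTne₂ := Fin.ext e2
  rw [r₁, r₂, eq_pair_of_card_two' hT₁ hTne₁, eq_pair_of_card_two' hT₂ hTne₂, q1, q2, hmm]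

/-- for every `2 < s < 3`, for all large enough `n` there is a Boolean
function of degree 3 with sparsity at most `n^s` such that every `0`-restriction on at
least `3·√(ln n)·n^((3-s)/2)` variables still has degree 3. -/
theorem stmt7 (s : ℝ) (hs1 : 2 < s) (hs2 : s < 3) :
    ∃ N : ℕ, ∀ n ≥ N, ∃ (f : (Fin n → ZMod 2) → ZMod 2) (M : Finset (Finset (Fin n))),
      IsANF f M ∧ (∀ S ∈ M, S.card ≤ 3) ∧ (∃ S ∈ M, S.card = 3) ∧
      (M.card : ℝ) ≤ (n : ℝ) ^ s ∧
      ∀ K : Finset (Fin n),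
        3 * Real.sqrt (Real.log n) * (n : ℝ) ^ (((3 : ℝ) - s) / 2) ≤ (K.card : ℝ) →
        ∀ M' : Finset (Finset (Fin n)), IsANF (zeroRestrict f K) M' →
          (∀ S ∈ M', S.card ≤ 3) ∧ ∃ S ∈ M', S.card = 3 := by
  have he1 : (0:ℝ) < (s-1)/2 := by linarith
  have he2 : (0:ℝ) < (3-s)/2 := by linarith
  have h1 : ∀ᶠ n : ℕ in Filter.atTop, (3:ℝ) ≤ (n:ℝ) ^ ((s-1)/2) :=
    ((tendsto_rpow_atTop he1).comp tendsto_natCast_atTop_atTop).eventually_ge_atTop 3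
  have h2 : ∀ᶠ n : ℕ in Filter.atTop, (2:ℝ) ≤ (n:ℝ) ^ ((3-s)/2) :=
    ((tendsto_rpow_atTop he2).comp tendsto_natCast_atTop_atTop).eventually_ge_atTop 2
  have h3 : ∀ᶠ n : ℕ in Filter.atTop, (4:ℝ) ≤ Real.log n :=
    (Real.tendsto_log_atTop.comp tendsto_natCast_atTop_atTop).eventually_ge_atTop 4
  have h0 : ∀ᶠ n : ℕ in Filter.atTop, 3 ≤ n := Filter.eventually_ge_atTop 3
  have hcomb := (h0.and (h1.and (h2.and h3)))
  rw [Filter.eventually_atTop] at hcomb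
  obtain ⟨N, hN⟩ := hcomb
  refine ⟨N, fun n hn => ?_⟩
  obtain ⟨hn3, hA, hX2, hlog⟩ := hN n hn
  have hnR : (0:ℝ) < (n:ℝ) := by exact_mod_cast (by omega : 0 < n)
  set b := ⌊(n:ℝ) ^ ((s-1)/2)⌋₊ with hbdef
  have hb3 : 3 ≤ b := Nat.le_floor (by exact_mod_cast hA)
  have hb0 : 0 < b := by omega
  have hble : (b:ℝ) ≤ (n:ℝ) ^ ((s-1)/2) := Nat.floor_le (Real.rpow_nonneg (Nat.cast_nonneg n) _)
  have hbgt : (n:ℝ) ^ ((s-1)/2) - 1 < (b:ℝ) := by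
    have := Nat.lt_floor_add_one ((n:ℝ) ^ ((s-1)/2))
    push_cast at this ⊢
    linarith
  set M := (univ : Finset (Finset (Fin n))).filter
    (fun S => S.card = 3 ∧ ∀ i ∈ S, ∀ j ∈ S, i.val / b = j.val / b) with hMdef
  have hMmem : ∀ S ∈ M, S.card = 3 ∧ ∀ i ∈ S, ∀ j ∈ S, i.val / b = j.val / b :=
    fun S hS => (Finset.mem_filter.mp hS).2
  refine ⟨anfEval M, M, fun x => rfl, fun S hS => (hMmem S hS).1.le, ?_, ?_, ?_⟩
  · -- existence of a degree-3 monomial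
    refine ⟨{⟨0, by omega⟩, ⟨1, by omega⟩, ⟨2, by omega⟩}, ?_, ?_⟩
    · rw [hMdef, Finset.mem_filter]
      refine ⟨Finset.mem_univ _, ?_, ?_⟩
      · rw [Finset.card_insert_of_notMem (by simp [Fin.ext_iff]),
          Finset.card_insert_of_notMem (by simp [Fin.ext_iff]), Finset.card_singleton]
      · intro i hi j hj
        simp only [Finset.mem_insert, Finset.mem_singleton] at hi hj
        have hiv : i.val < 3 := by rcases hi with rfl | rfl | rfl <;> simp
        have hjv : j.val < 3 := by rcases hj with rfl | rfl | rfl <;> simp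
        rw [Nat.div_eq_of_lt (by omega), Nat.div_eq_of_lt (by omega)]
    · rw [Finset.card_insert_of_notMem (by simp [Fin.ext_iff]),
        Finset.card_insert_of_notMem (by simp [Fin.ext_iff]), Finset.card_singleton]
  · -- sparsity bound
    have hmaps : ∀ S ∈ M, enc b S ∈ (range n) ×ˢ (range b) ×ˢ (range b) := by
      intro S hS
      obtain ⟨hc, -⟩ := hMmem S hS
      rw [enc, dif_pos hc]
      simp only [Finset.mem_product, Finset.mem_range]
      exact ⟨(S.min' _).isLt, Nat.mod_lt _ hb0, Nat.mod_lt _ hb0⟩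
    have hinj : Set.InjOn (enc b) (M : Set (Finset (Fin n))) := by
      intro S₁ hS₁ S₂ hS₂ he
      obtain ⟨hc₁, hq₁⟩ := hMmem S₁ hS₁
      obtain ⟨hc₂, hq₂⟩ := hMmem S₂ hS₂
      exact enc_inj hc₁ hq₁ hc₂ hq₂ he
    have hcard := Finset.card_le_card_of_injOn (enc b) hmaps hinj
    simp only [Finset.card_product, Finset.card_range] at hcard
    have hcR : (M.card : ℝ) ≤ (n:ℝ) * ((b:ℝ) * (b:ℝ)) := by
      calc (M.card : ℝ) ≤ ((n * (b * b) : ℕ) : ℝ) := by exact_mod_cast hcard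
        _ = (n:ℝ) * ((b:ℝ) * (b:ℝ)) := by push_cast; ring
    have hfinal : (n:ℝ) * ((n:ℝ) ^ ((s-1)/2) * (n:ℝ) ^ ((s-1)/2)) = (n:ℝ) ^ s := by
      rw [← Real.rpow_add hnR]
      nth_rewrite 1 [← Real.rpow_one (n:ℝ)]
      rw [← Real.rpow_add hnR]
      congr 1
      ring
    calc (M.card : ℝ) ≤ (n:ℝ) * ((b:ℝ) * (b:ℝ)) := hcR
      _ ≤ (n:ℝ) * ((n:ℝ) ^ ((s-1)/2) * (n:ℝ) ^ ((s-1)/2)) := by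
          have hb0R : (0:ℝ) ≤ (b:ℝ) := Nat.cast_nonneg b
          have := mul_le_mul hble hble hb0R (Real.rpow_nonneg hnR.le _)
          nlinarith
      _ = (n:ℝ) ^ s := hfinal
  · -- restrictions
    intro K hK M' hM'
    have hM'eq : M' = M.filter (· ⊆ K) :=
      anf_unique _ _ (fun x => (hM' x).symm.trans (zeroRestrict_anf M K x))
    have hXpos : (0:ℝ) < (n:ℝ) ^ ((3-s)/2) := Real.rpow_pos_of_pos hnR _
    have hL : (2:ℝ) ≤ Real.sqrt (Real.log n) := by
      have h4 : Real.sqrt 4 ≤ Real.sqrt (Real.log n) := Real.sqrt_le_sqrt hlog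
      rwa [show (4:ℝ) = 2^2 by norm_num, Real.sqrt_sq (by norm_num : (0:ℝ) ≤ 2)] at h4
    have hdiv : ((n / b : ℕ) : ℝ) ≤ 2 * (n:ℝ) ^ ((3-s)/2) := by
      have hc := Nat.cast_div_le (α := ℝ) (m := n) (n := b)
      have hb2 : (n:ℝ) ^ ((s-1)/2) / 2 ≤ (b:ℝ) := by linarith
      have hb2pos : (0:ℝ) < (n:ℝ) ^ ((s-1)/2) / 2 := by
        have := Real.rpow_pos_of_pos hnR ((s-1)/2); linarith
      have h5 : (n:ℝ) / (b:ℝ) ≤ (n:ℝ) / ((n:ℝ) ^ ((s-1)/2) / 2) := by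
        gcongr
      have h6 : (n:ℝ) / ((n:ℝ) ^ ((s-1)/2) / 2) = 2 * (n:ℝ) ^ ((3-s)/2) := by
        rw [div_div_eq_mul_div, mul_comm, mul_div_assoc]
        congr 1
        rw [show (3-s)/2 = 1 - (s-1)/2 by ring, Real.rpow_sub hnR, Real.rpow_one]
      linarith
    have hlt : 2 * (n / b + 1) < K.card := by
      have hcast : ((2 * (n / b + 1) : ℕ) : ℝ) < (K.card : ℝ) := by
        push_cast
        nlinarith [hK, hdiv, hX2, hL, hXpos,
          mul_le_mul_of_nonneg_right hL hXpos.le]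
      exact_mod_cast hcast
    have hmapsK : ∀ i ∈ K, i.val / b ∈ Finset.range (n / b + 1) := by
      intro i _
      rw [Finset.mem_range]
      exact Nat.lt_succ_of_le (Nat.div_le_div_right i.isLt.le)
    obtain ⟨q, hq, hfib⟩ := Finset.exists_lt_card_fiber_of_mul_lt_card_of_maps_to (n := 2) hmapsK
      (by rw [Finset.card_range]; omega)
    obtain ⟨t, hts, htc⟩ := Finset.exists_subset_card_eq (s := Finset.filter (fun x => x.val / b = q) K) (n := 3) (by omega)
    have htK : t ⊆ K := hts.trans (Finset.filter_subset _ _)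
    have htM : t ∈ M := by
      rw [hMdef, Finset.mem_filter]
      refine ⟨Finset.mem_univ _, htc, ?_⟩
      intro i hi j hj
      have hi' := (Finset.mem_filter.mp (hts hi)).2
      have hj' := (Finset.mem_filter.mp (hts hj)).2
      rw [hi', hj']
    refine ⟨?_, ⟨t, ?_, htc⟩⟩
    · intro S hS
      rw [hM'eq] at hS
      exact (hMmem S (Finset.mem_of_mem_filter _ hS)).1.le
    · rw [hM'eq]
      exact Finset.mem_filter.mpr ⟨htM, htK⟩
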